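/- Let P and N be complementary subsets of {1,...,n} of sizes s and n-s, let C be an [n,k] code with C_P of dimension s, let C_aux be an [s, k_aux] code, and let H~ = { (h, c_aux) in C^perp × C_aux : |h_N| = w and |h_P + c_aux| = t_aux } be nonempty. Fix y = c + e with c in C, and x in F_2^s. Let R in F_2^{s×(n-s)} satisfy h_P = h_N R^T for all h in C^perp. Then the bias of <y,h> + <x,c_aux> over uniform (h,c_aux) in H~ equals (1/2^{k - k_aux}) * (1/|H~|) * sum_{i=0}^{n-s} sum_{j=0}^{s} N_{i,j} * K_w^{(n-s)}(i) * K_{t_aux}^{(s)}(j), where N_{i,j} = #{ (r, c^N) in (x + C_aux^perp) × C^N : |r| = j and |(r + e_P) R + e_N + c^N| = i }. -/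

import Mathlib

open scoped Classical

/-- The Krawtchouk polynomial of degree `w` and order `n`, evaluated at the integer `t`. -/
def krawtchouk (n w t : ℕ) : ℤ :=
  ∑ j ∈ Finset.range (w + 1), (-1 : ℤ) ^ j * (t.choose j : ℤ) * ((n - t).choose (w - j) : ℤ)

/-- The dual code `{ h : ∀ c ∈ C, <c,h> = 0 }`. -/
def dualCode {ι : Type*} [Fintype ι] (C : Submodule (ZMod 2) (ι → ZMod 2)) :
    Submodule (ZMod 2) (ι → ZMod 2) where
  carrier := {h | ∀ c ∈ C, ∑ i, c i * h i = 0}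
  zero_mem' := by intro c hc; simp
  add_mem' := by
    intro a b ha hb c hc
    have h1 := ha c hc
    have h2 := hb c hc
    simp only [Pi.add_apply, mul_add, Finset.sum_add_distrib, h1, h2, add_zero]
  smul_mem' := by
    intro r a ha c hc
    have h1 := ha c hc
    simp only [Pi.smul_apply, smul_eq_mul]
    calc ∑ i, c i * (r * a i) = r * ∑ i, c i * a i := by
          rw [Finset.mul_sum]; exact Finset.sum_congr rfl (fun i _ => by ring)
      _ = 0 := by rw [h1, mul_zero]

/-- The dual code of a code on `F_2^s × F_2^{n-s}` (positions split into `P` and `N`). -/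
def dualCodeProd (s m : ℕ)
    (C : Submodule (ZMod 2) ((Fin s → ZMod 2) × (Fin m → ZMod 2))) :
    Submodule (ZMod 2) ((Fin s → ZMod 2) × (Fin m → ZMod 2)) where
  carrier := {h | ∀ c ∈ C, (∑ i, c.1 i * h.1 i) + (∑ j, c.2 j * h.2 j) = 0}
  zero_mem' := by intro c hc; simp
  add_mem' := by
    intro a b ha hb c hc
    have h1 := ha c hc
    have h2 := hb c hc
    try simp only [Set.mem_setOf_eq] at h1 h2 ⊢
    simp only [Prod.fst_add, Prod.snd_add, Pi.add_apply, mul_add, Finset.sum_add_distrib]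
    linear_combination h1 + h2
  smul_mem' := by
    intro r a ha c hc
    have h1 := ha c hc
    try simp only [Set.mem_setOf_eq] at h1 ⊢
    simp only [Prod.smul_fst, Prod.smul_snd, Pi.smul_apply, smul_eq_mul]
    have e1 : ∑ i, c.1 i * (r * a.1 i) = r * ∑ i, c.1 i * a.1 i := by
      rw [Finset.mul_sum]; exact Finset.sum_congr rfl (fun i _ => by ring)
    have e2 : ∑ j, c.2 j * (r * a.2 j) = r * ∑ j, c.2 j * a.2 j := by
      rw [Finset.mul_sum]; exact Finset.sum_congr rfl (fun j _ => by ring)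
    rw [e1, e2, ← mul_add, h1, mul_zero]

/-- Duality formula for the bias of the `double-RLPN` LPN samples.  Positions are split into
`P` of size `s` and `N` of size `m = n - s`; `C` is an `[n,k]` code with `C_P` full rank,
`C_aux` an `[s,k_aux]` code, `H~` the set of pairs `(h, c_aux) ∈ C^⊥ × C_aux` with
`|h_N| = w` and `|h_P + c_aux| = t_aux`, `y = c + e` with `c ∈ C` and `e = (e_P, e_N)`, and
`R` is the matrix with `h_P = h_N Rᵀ` on `C^⊥`.  Then the bias of `<y,h> + <x,c_aux>` over
uniform `(h, c_aux) ∈ H~` equals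
`2^{-(k-k_aux)} |H~|⁻¹ ∑_{i,j} N_{i,j} K_w^{(m)}(i) K_{t_aux}^{(s)}(j)`, where
`N_{i,j} = #{(r, c^N) ∈ (x + C_aux^⊥) × C^N : |r| = j, |(r+e_P)R + e_N + c^N| = i}`. -/

lemma add_self_zmod2 {M : Type*} [AddCommGroup M] [Module (ZMod 2) M] (v : M) : v + v = 0 := by
  have : ((2 : ZMod 2)) • v = 0 := by
    have h2 : (2 : ZMod 2) = 0 := rfl
    rw [h2, zero_smul]
  simpa [two_smul] using this

noncomputable def chi (a : ZMod 2) : ℝ := (-1) ^ a.val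

lemma chi_add (a b : ZMod 2) : chi (a + b) = chi a * chi b := by
  rcases (show a = 0 ∨ a = 1 by revert a; decide) with rfl | rfl <;>
    rcases (show b = 0 ∨ b = 1 by revert b; decide) with rfl | rfl
  · simp [chi]
  · simp [chi]
  · simp [chi]
  · rw [show ((1:ZMod 2)+1) = 0 from rfl]; simp [chi, ZMod.val_one]

lemma chi_zero : chi 0 = 1 := by simp [chi]

lemma chi_one : chi 1 = -1 := by simp [chi, ZMod.val_one]

lemma chi_sum {α : Type*} (t : Finset α) (f : α → ZMod 2) :
    chi (∑ i ∈ t, f i) = ∏ i ∈ t, chi (f i) := by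
  induction t using Finset.induction with
  | empty => simp [chi_zero]
  | insert a t h ih => rw [Finset.sum_insert h, Finset.prod_insert h, chi_add, ih]

/-- character sum over a submodule -/
lemma char_sum {M : Type*} [AddCommGroup M] [Module (ZMod 2) M] [Fintype M]
    (b : M →ₗ[ZMod 2] M →ₗ[ZMod 2] ZMod 2) (V : Submodule (ZMod 2) M) (u : M) :
    ∑ v ∈ Finset.univ.filter (· ∈ V), chi (b u v)
      = if ∀ v ∈ V, b u v = 0 then ((Finset.univ.filter (· ∈ V)).card : ℝ) else 0 := by
  split_ifs with h
  · rw [Finset.sum_congr rfl (fun v hv => by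
      rw [h v (Finset.mem_filter.mp hv).2, chi_zero])]
    simp
  · push_neg at h
    obtain ⟨v0, hv0, hb⟩ := h
    have hb1 : b u v0 = 1 := by
      have := hb; revert this; generalize b u v0 = t; revert t; decide
    have key : ∑ v ∈ Finset.univ.filter (· ∈ V), chi (b u v)
        = - ∑ v ∈ Finset.univ.filter (· ∈ V), chi (b u v) := by
      nth_rewrite 1 [show (Finset.univ.filter (· ∈ V))
          = (Finset.univ.filter (· ∈ V)).image (fun v => v + v0) from ?_]
      · rw [Finset.sum_image ?inj]
        case inj =>
          intro a _ c _ hac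
          have := congrArg (· + v0) hac
          simpa [add_assoc, CharTwo.add_self_eq_zero] using this
        rw [← Finset.sum_neg_distrib]
        apply Finset.sum_congr rfl
        intro v hv
        rw [map_add, chi_add, hb1, chi_one]
        ring
      · ext a
        simp only [Finset.mem_image, Finset.mem_filter, Finset.mem_univ, true_and]
        constructor
        · intro ha
          exact ⟨a + v0, V.add_mem ha hv0, by rw [add_assoc, add_self_zmod2, add_zero]⟩
        · rintro ⟨c, hc, rfl⟩
          exact V.add_mem hc hv0
    linarith

noncomputable def dotB (ι : Type*) [Fintype ι] :
    LinearMap.BilinForm (ZMod 2) (ι → ZMod 2) :=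
  LinearMap.mk₂ (ZMod 2) (fun x y => ∑ i, x i * y i)
    (fun a b y => by simp [add_mul, Finset.sum_add_distrib])
    (fun c a y => by simp [Finset.mul_sum, mul_assoc])
    (fun a b y => by simp [mul_add, Finset.sum_add_distrib])
    (fun c a y => by
      simp only [Pi.smul_apply, smul_eq_mul, Finset.mul_sum]
      exact Finset.sum_congr rfl fun i _ => by ring)

@[simp] lemma dotB_apply {ι : Type*} [Fintype ι] (x y : ι → ZMod 2) :
    dotB ι x y = ∑ i, x i * y i := rfl

lemma dotB_comm {ι : Type*} [Fintype ι] (x y : ι → ZMod 2) :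
    dotB ι x y = dotB ι y x := by
  simp [mul_comm]

lemma dotB_nondeg (ι : Type*) [Fintype ι] : (dotB ι).Nondegenerate := by
  refine (LinearMap.IsRefl.nondegenerate_iff_separatingLeft (fun x y h => by rwa [dotB_comm])).mpr ?_
  intro x hx
  funext i
  have := hx (Pi.single i 1)
  simpa [Pi.single_apply, Finset.sum_ite_eq] using this

lemma dotB_refl (ι : Type*) [Fintype ι] : (dotB ι).IsRefl := by
  intro x y h
  rwa [dotB_comm]

lemma dualCode_eq_orth {ι : Type*} [Fintype ι] (V : Submodule (ZMod 2) (ι → ZMod 2)) :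
    dualCode V = (dotB ι).orthogonal V := by
  ext h
  simp only [dualCode, Submodule.mem_mk, AddSubmonoid.mem_mk, AddSubsemigroup.mem_mk,
    Set.mem_setOf_eq, LinearMap.BilinForm.mem_orthogonal_iff]
  rfl

lemma dualCode_dualCode {ι : Type*} [Fintype ι] (V : Submodule (ZMod 2) (ι → ZMod 2)) :
    dualCode (dualCode V) = V := by
  rw [dualCode_eq_orth, dualCode_eq_orth]
  exact LinearMap.BilinForm.orthogonal_orthogonal (dotB_nondeg ι) (dotB_refl ι) V

lemma finrank_dualCode {ι : Type*} [Fintype ι] (V : Submodule (ZMod 2) (ι → ZMod 2)) :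
    Module.finrank (ZMod 2) (dualCode V) = Fintype.card ι - Module.finrank (ZMod 2) V := by
  rw [dualCode_eq_orth, LinearMap.BilinForm.finrank_orthogonal (dotB_nondeg ι),
    Module.finrank_pi]

lemma card_filter_submodule {M : Type*} [AddCommGroup M] [Module (ZMod 2) M] [Fintype M]
    (V : Submodule (ZMod 2) M) :
    (Finset.univ.filter (· ∈ V)).card = 2 ^ Module.finrank (ZMod 2) V := by
  have : (Finset.univ.filter (· ∈ V)).card = Fintype.card V := by
    rw [Fintype.card_subtype]
  rw [this, Module.card_eq_pow_finrank (K := ZMod 2), ZMod.card]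

noncomputable def prodB (s m : ℕ) :
    LinearMap.BilinForm (ZMod 2) ((Fin s → ZMod 2) × (Fin m → ZMod 2)) :=
  LinearMap.mk₂ (ZMod 2)
    (fun x y => (∑ i, x.1 i * y.1 i) + ∑ j, x.2 j * y.2 j)
    (fun a b y => by
      simp only [Prod.fst_add, Prod.snd_add, Pi.add_apply, add_mul, Finset.sum_add_distrib]
      ring)
    (fun c a y => by
      simp only [Prod.smul_fst, Prod.smul_snd, Pi.smul_apply, smul_eq_mul, mul_add,
        Finset.mul_sum]
      congr 1 <;> exact Finset.sum_congr rfl fun i _ => by ring)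
    (fun a y₁ y₂ => by
      simp only [Prod.fst_add, Prod.snd_add, Pi.add_apply, mul_add, Finset.sum_add_distrib]
      ring)
    (fun c a y => by
      simp only [Prod.smul_fst, Prod.smul_snd, Pi.smul_apply, smul_eq_mul, mul_add,
        Finset.mul_sum]
      congr 1 <;> exact Finset.sum_congr rfl fun i _ => by ring)

@[simp] lemma prodB_apply {s m : ℕ} (x y : (Fin s → ZMod 2) × (Fin m → ZMod 2)) :
    prodB s m x y = (∑ i, x.1 i * y.1 i) + ∑ j, x.2 j * y.2 j := rfl

lemma prodB_comm {s m : ℕ} (x y : (Fin s → ZMod 2) × (Fin m → ZMod 2)) :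
    prodB s m x y = prodB s m y x := by
  simp [mul_comm]

lemma prodB_nondeg (s m : ℕ) : (prodB s m).Nondegenerate := by
  refine (LinearMap.IsRefl.nondegenerate_iff_separatingLeft (fun x y h => by rwa [prodB_comm])).mpr ?_
  intro x hx
  have h1 : x.1 = 0 := by
    funext i
    have := hx (Pi.single i 1, 0)
    simpa [Pi.single_apply, Finset.sum_ite_eq] using this
  have h2 : x.2 = 0 := by
    funext j
    have := hx (0, Pi.single j 1)
    simpa [Pi.single_apply, Finset.sum_ite_eq] using this
  exact Prod.ext h1 h2

lemma prodB_refl (s m : ℕ) : (prodB s m).IsRefl := by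
  intro x y h
  rwa [prodB_comm]

lemma dualCodeProd_eq_orth {s m : ℕ}
    (C : Submodule (ZMod 2) ((Fin s → ZMod 2) × (Fin m → ZMod 2))) :
    dualCodeProd s m C = (prodB s m).orthogonal C := by
  ext h
  simp only [dualCodeProd, Submodule.mem_mk, AddSubmonoid.mem_mk, AddSubsemigroup.mem_mk,
    Set.mem_setOf_eq, LinearMap.BilinForm.mem_orthogonal_iff]
  rfl

lemma dualCodeProd_dualCodeProd {s m : ℕ}
    (C : Submodule (ZMod 2) ((Fin s → ZMod 2) × (Fin m → ZMod 2))) :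
    dualCodeProd s m (dualCodeProd s m C) = C := by
  rw [dualCodeProd_eq_orth, dualCodeProd_eq_orth]
  exact LinearMap.BilinForm.orthogonal_orthogonal (prodB_nondeg s m) (prodB_refl s m) C

lemma zmod2_cases (a : ZMod 2) : a = 0 ∨ a = 1 := by revert a; decide

lemma count_inter (n w j : ℕ) (hj : j ≤ w) (Z : Finset (Fin n)) :
    (((Finset.powersetCard w (Finset.univ : Finset (Fin n)))).filter
        (fun T => (T ∩ Z).card = j)).card
      = Z.card.choose j * (n - Z.card).choose (w - j) := by
  have key : (((Finset.powersetCard w (Finset.univ : Finset (Fin n)))).filter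
        (fun T => (T ∩ Z).card = j)).card
      = ((Finset.powersetCard j Z) ×ˢ (Finset.powersetCard (w - j) Zᶜ)).card := by
    apply Finset.card_nbij' (fun T => (T ∩ Z, T \ Z)) (fun q => q.1 ∪ q.2)
    · intro T hT
      simp only [Finset.mem_coe, Finset.mem_filter, Finset.mem_powersetCard_univ] at hT
      obtain ⟨hw, hjj⟩ := hT
      simp only [Finset.mem_coe, Finset.mem_product, Finset.mem_powersetCard]
      refine ⟨⟨Finset.inter_subset_right, hjj⟩, ?_, ?_⟩
      · intro a ha
        simp only [Finset.mem_sdiff] at ha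
        simpa using ha.2
      · have := Finset.card_inter_add_card_sdiff T Z
        omega
    · intro q hq
      simp only [Finset.mem_coe, Finset.mem_product, Finset.mem_powersetCard] at hq
      obtain ⟨⟨hA, hAc⟩, hB, hBc⟩ := hq
      have hdisj : Disjoint q.1 q.2 := by
        apply Finset.disjoint_left.mpr
        intro a ha hb
        exact (Finset.mem_compl.mp (hB hb)) (hA ha)
      simp only [Finset.mem_coe, Finset.mem_filter, Finset.mem_powersetCard_univ]
      constructor
      · rw [Finset.card_union_of_disjoint hdisj, hAc, hBc]
        omega
      · have : (q.1 ∪ q.2) ∩ Z = q.1 := by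
          ext a
          simp only [Finset.mem_inter, Finset.mem_union]
          constructor
          · rintro ⟨h1 | h2, hz⟩
            · exact h1
            · exact absurd hz (Finset.mem_compl.mp (hB h2))
          · intro h
            exact ⟨Or.inl h, hA h⟩
        rw [this, hAc]
    · intro T hT
      ext a
      simp only [Finset.mem_union, Finset.mem_inter, Finset.mem_sdiff]
      tauto
    · intro q hq
      simp only [Finset.mem_coe, Finset.mem_product, Finset.mem_powersetCard] at hq
      obtain ⟨⟨hA, hAc⟩, hB, hBc⟩ := hq
      have e1 : (q.1 ∪ q.2) ∩ Z = q.1 := by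
        ext a
        simp only [Finset.mem_inter, Finset.mem_union]
        constructor
        · rintro ⟨h1 | h2, hz⟩
          · exact h1
          · exact absurd hz (Finset.mem_compl.mp (hB h2))
        · intro h
          exact ⟨Or.inl h, hA h⟩
      have e2 : (q.1 ∪ q.2) \ Z = q.2 := by
        ext a
        simp only [Finset.mem_sdiff, Finset.mem_union]
        constructor
        · rintro ⟨h1 | h2, hz⟩
          · exact absurd (hA h1) hz
          · exact h2
        · intro h
          exact ⟨Or.inr h, Finset.mem_compl.mp (hB h)⟩
      beta_reduce
      rw [e1, e2]
  rw [key, Finset.card_product, Finset.card_powersetCard, Finset.card_powersetCard,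
    Finset.card_compl, Fintype.card_fin]

lemma kraw_sum (n w : ℕ) (z : Fin n → ZMod 2) :
    ∑ v ∈ Finset.univ.filter (fun v : Fin n → ZMod 2 => hammingNorm v = w),
      chi (∑ i, z i * v i) = (krawtchouk n w (hammingNorm z) : ℝ) := by
  classical
  set Z : Finset (Fin n) := Finset.univ.filter (fun i => z i ≠ 0) with hZ
  have hZcard : Z.card = hammingNorm z := rfl
  -- step 1: reindex over supports
  have step1 : ∑ v ∈ Finset.univ.filter (fun v : Fin n → ZMod 2 => hammingNorm v = w),
      chi (∑ i, z i * v i)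
      = ∑ T ∈ Finset.powersetCard w (Finset.univ : Finset (Fin n)),
          chi (∑ i ∈ T, z i) := by
    apply Finset.sum_nbij' (fun v => Finset.univ.filter (fun i => v i ≠ 0))
      (fun T => fun i => if i ∈ T then 1 else 0)
    · intro v hv
      simp only [Finset.mem_filter, Finset.mem_univ, true_and] at hv
      rw [Finset.mem_powersetCard_univ]
      exact hv
    · intro T hT
      rw [Finset.mem_powersetCard_univ] at hT
      simp only [Finset.mem_filter, Finset.mem_univ, true_and]
      rw [← hT, hammingNorm]
      congr 1
      ext i
      simp only [Finset.mem_filter, Finset.mem_univ, true_and]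
      split_ifs with h <;> simp [h]
    · intro v hv
      funext i
      simp only [Finset.mem_filter, Finset.mem_univ, true_and]
      split_ifs with h
      · rcases zmod2_cases (v i) with h0 | h1
        · exact absurd h0 h
        · exact h1.symm
      · push_neg at h
        exact h.symm
    · intro T hT
      ext i
      simp only [Finset.mem_filter, Finset.mem_univ, true_and]
      split_ifs with h <;> simp [h]
    · intro v hv
      congr 1
      rw [← Finset.sum_filter_of_ne (p := fun i => v i ≠ 0) (s := Finset.univ)
        (f := fun i => z i * v i) (fun x _ hx h0 => hx (by simp [h0]))]
      apply Finset.sum_congr rfl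
      intro i hi
      simp only [Finset.mem_filter] at hi
      have : v i = 1 := by
        rcases zmod2_cases (v i) with h0 | h1
        · exact absurd h0 hi.2
        · exact h1
      rw [this, mul_one]
  rw [step1]
  -- step 2: replace chi by (-1)^(card)
  have step2 : ∀ T ∈ Finset.powersetCard w (Finset.univ : Finset (Fin n)),
      chi (∑ i ∈ T, z i) = (-1 : ℝ) ^ (T ∩ Z).card := by
    intro T _
    rw [chi_sum]
    have : T ∩ Z = T.filter (fun i => z i ≠ 0) := by
      ext i
      simp [hZ, Finset.mem_inter, Finset.mem_filter]
    rw [this]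
    rw [← Finset.prod_filter_mul_prod_filter_not T (fun i => z i ≠ 0) (fun i => chi (z i))]
    have h1 : ∏ i ∈ T.filter (fun i => z i ≠ 0), chi (z i)
        = (-1 : ℝ) ^ (T.filter (fun i => z i ≠ 0)).card := by
      rw [← Finset.prod_const]
      apply Finset.prod_congr rfl
      intro i hi
      simp only [Finset.mem_filter] at hi
      have : z i = 1 := by
        rcases zmod2_cases (z i) with h0 | h1
        · exact absurd h0 hi.2
        · exact h1
      rw [this, chi_one]
    have h2 : ∏ i ∈ T.filter (fun i => ¬z i ≠ 0), chi (z i) = 1 := by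
      apply Finset.prod_eq_one
      intro i hi
      simp only [Finset.mem_filter, not_not] at hi
      rw [hi.2, chi_zero]
    rw [h1, h2, mul_one]
  rw [Finset.sum_congr rfl step2]
  -- step 3: fiberwise
  rw [← Finset.sum_fiberwise_of_maps_to (t := Finset.range (w + 1))
    (g := fun T => (T ∩ Z).card) (fun T hT => by
      rw [Finset.mem_powersetCard_univ] at hT
      simp only [Finset.mem_range]
      have : (T ∩ Z).card ≤ T.card := Finset.card_le_card Finset.inter_subset_left
      omega)]
  rw [krawtchouk]
  push_cast
  apply Finset.sum_congr rfl
  intro j hj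
  rw [Finset.mem_range] at hj
  have : ∀ T ∈ (Finset.powersetCard w (Finset.univ : Finset (Fin n))).filter
      (fun T => (T ∩ Z).card = j), (-1 : ℝ) ^ (T ∩ Z).card = (-1) ^ j := by
    intro T hT
    rw [(Finset.mem_filter.mp hT).2]
  rw [Finset.sum_congr rfl this, Finset.sum_const, count_inter n w j (by omega) Z, hZcard]
  push_cast
  ring

open scoped Matrix

lemma exponent_eq (R : Matrix (Fin s) (Fin m) (ZMod 2))
    (y1 x c1 r u : Fin s → ZMod 2) (y2 c2 v : Fin m → ZMod 2) :
    ((Matrix.mulVec R v) ⬝ᵥ c1 + v ⬝ᵥ c2) + (u + Matrix.mulVec R v) ⬝ᵥ r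
        + ((y1 ⬝ᵥ Matrix.mulVec R v + y2 ⬝ᵥ v) + x ⬝ᵥ (u + Matrix.mulVec R v))
      = (Matrix.vecMul (y1 + x + c1 + r) R + y2 + c2) ⬝ᵥ v + (r + x) ⬝ᵥ u := by
  simp only [add_dotProduct, dotProduct_add, Matrix.add_vecMul]
  rw [dotProduct_comm (Matrix.mulVec R v) c1,
    dotProduct_comm (Matrix.mulVec R v) r,
    dotProduct_comm v c2, dotProduct_comm u r,
    Matrix.dotProduct_mulVec c1, Matrix.dotProduct_mulVec r,
    Matrix.dotProduct_mulVec y1, Matrix.dotProduct_mulVec x]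
  abel

open scoped Matrix

lemma mem_dualCode_iff {ι : Type*} [Fintype ι] (V : Submodule (ZMod 2) (ι → ZMod 2))
    (u : ι → ZMod 2) : u ∈ dualCode V ↔ ∀ c ∈ V, dotB ι u c = 0 := by
  constructor
  · intro h c hc
    rw [dotB_comm]
    exact h c hc
  · intro h c hc
    have := h c hc
    rw [dotB_comm] at this
    exact this

lemma mem_dualCodeProd_iff {s m : ℕ}
    (C : Submodule (ZMod 2) ((Fin s → ZMod 2) × (Fin m → ZMod 2)))
    (u : (Fin s → ZMod 2) × (Fin m → ZMod 2)) :
    u ∈ dualCodeProd s m C ↔ ∀ c ∈ C, prodB s m u c = 0 := by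
  constructor
  · intro h c hc
    rw [prodB_comm]
    exact h c hc
  · intro h c hc
    have := h c hc
    rw [prodB_comm] at this
    exact this

lemma indicator_char_prod {s m : ℕ}
    (C : Submodule (ZMod 2) ((Fin s → ZMod 2) × (Fin m → ZMod 2)))
    (u : (Fin s → ZMod 2) × (Fin m → ZMod 2)) :
    (if u ∈ dualCodeProd s m C then (1 : ℝ) else 0)
      = ((Finset.univ.filter (· ∈ C)).card : ℝ)⁻¹ *
          ∑ c ∈ Finset.univ.filter (· ∈ C), chi (prodB s m u c) := by
  rw [char_sum (prodB s m) C u]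
  have hpos : (0 : ℝ) < ((Finset.univ.filter (· ∈ C)).card : ℝ) := by
    have : (0 : (Fin s → ZMod 2) × (Fin m → ZMod 2)) ∈ Finset.univ.filter (· ∈ C) := by
      simp [Submodule.zero_mem]
    exact_mod_cast Finset.card_pos.mpr ⟨0, this⟩
  simp only [mem_dualCodeProd_iff]
  split_ifs with h
  · rw [inv_mul_cancel₀ (ne_of_gt hpos)]
  · rw [mul_zero]

lemma indicator_char_dual {n : ℕ} (V : Submodule (ZMod 2) (Fin n → ZMod 2))
    (u : Fin n → ZMod 2) :
    (if u ∈ V then (1 : ℝ) else 0)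
      = ((Finset.univ.filter (· ∈ dualCode V)).card : ℝ)⁻¹ *
          ∑ r ∈ Finset.univ.filter (· ∈ dualCode V), chi (dotB (Fin n) u r) := by
  rw [char_sum (dotB (Fin n)) (dualCode V) u]
  have hpos : (0 : ℝ) < ((Finset.univ.filter (· ∈ dualCode V)).card : ℝ) := by
    have : (0 : Fin n → ZMod 2) ∈ Finset.univ.filter (· ∈ dualCode V) := by
      simp [Submodule.zero_mem]
    exact_mod_cast Finset.card_pos.mpr ⟨0, this⟩
  have hiff : (∀ r ∈ dualCode V, dotB (Fin n) u r = 0) ↔ u ∈ V := by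
    rw [← mem_dualCode_iff (dualCode V) u, dualCode_dualCode]
  simp only [hiff]
  split_ifs with h
  · rw [inv_mul_cancel₀ (ne_of_gt hpos)]
  · rw [mul_zero]

lemma hammingNorm_le {ι : Type*} [Fintype ι] (v : ι → ZMod 2) :
    hammingNorm v ≤ Fintype.card ι :=
  (Finset.card_filter_le _ _).trans (le_of_eq (Finset.card_univ))

lemma kraw_sum' (n w : ℕ) (z : Fin n → ZMod 2) :
    ∑ v ∈ Finset.univ.filter (fun v : Fin n → ZMod 2 => hammingNorm v = w),
      chi (z ⬝ᵥ v) = (krawtchouk n w (hammingNorm z) : ℝ) :=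
  kraw_sum n w z


set_option maxHeartbeats 2000000 in
theorem stmt10 (s m k kaux w taux : ℕ)
    (C : Submodule (ZMod 2) ((Fin s → ZMod 2) × (Fin m → ZMod 2)))
    (Caux : Submodule (ZMod 2) (Fin s → ZMod 2))
    (hk : Module.finrank (ZMod 2) C = k)
    (hkaux : Module.finrank (ZMod 2) Caux = kaux)
    (hkk : kaux ≤ k)
    (hfull : Submodule.map
      (LinearMap.fst (ZMod 2) (Fin s → ZMod 2) (Fin m → ZMod 2)) C = ⊤)
    (R : Matrix (Fin s) (Fin m) (ZMod 2))
    (hR : ∀ h ∈ dualCodeProd s m C, h.1 = Matrix.mulVec R h.2)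
    (eP : Fin s → ZMod 2) (eN : Fin m → ZMod 2)
    (c : (Fin s → ZMod 2) × (Fin m → ZMod 2)) (hc : c ∈ C)
    (y : (Fin s → ZMod 2) × (Fin m → ZMod 2)) (hy : y = c + (eP, eN))
    (x : Fin s → ZMod 2)
    (Ht : Finset (((Fin s → ZMod 2) × (Fin m → ZMod 2)) × (Fin s → ZMod 2)))
    (hHt : Ht = Finset.univ.filter (fun p =>
        p.1 ∈ dualCodeProd s m C ∧ p.2 ∈ Caux ∧
        hammingNorm p.1.2 = w ∧ hammingNorm (p.1.1 + p.2) = taux))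
    (hne : Ht.Nonempty)
    (N : ℕ → ℕ → ℕ)
    (hN : ∀ i j, N i j =
      (Finset.univ.filter (fun q : (Fin s → ZMod 2) × (Fin m → ZMod 2) =>
        (q.1 + x) ∈ dualCode Caux ∧
        q.2 ∈ Submodule.comap
          (LinearMap.inr (ZMod 2) (Fin s → ZMod 2) (Fin m → ZMod 2)) C ∧
        hammingNorm q.1 = j ∧
        hammingNorm (Matrix.vecMul (q.1 + eP) R + eN + q.2) = i)).card) :
    (Ht.card : ℝ)⁻¹ *
        ∑ p ∈ Ht,
          (-1 : ℝ) ^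
            (((∑ i, y.1 i * p.1.1 i) + (∑ j, y.2 j * p.1.2 j)) + (∑ i, x i * p.2 i)).val
      = ((2 : ℝ) ^ (k - kaux))⁻¹ * (Ht.card : ℝ)⁻¹ *
          ∑ i ∈ Finset.range (m + 1), ∑ j ∈ Finset.range (s + 1),
            (N i j : ℝ) * (krawtchouk m w i : ℝ) * (krawtchouk s taux j : ℝ) := by
  classical
  -- abbreviations
  set Cfin : Finset ((Fin s → ZMod 2) × (Fin m → ZMod 2)) := Finset.univ.filter (· ∈ C) with hCfin
  set Dfin : Finset (Fin s → ZMod 2) := Finset.univ.filter (· ∈ dualCode Caux) with hDfin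
  set Xfin : Finset (Fin s → ZMod 2) := Finset.univ.filter (fun r => r + x ∈ dualCode Caux) with hXfin
  set CNfin : Finset (Fin m → ZMod 2) := Finset.univ.filter
    (· ∈ Submodule.comap (LinearMap.inr (ZMod 2) (Fin s → ZMod 2) (Fin m → ZMod 2)) C) with hCNfin
  -- the key sum identity
  have key : ∑ p ∈ Ht,
      (-1 : ℝ) ^ (((∑ i, y.1 i * p.1.1 i) + (∑ j, y.2 j * p.1.2 j)) + (∑ i, x i * p.2 i)).val
      = ((2 : ℝ) ^ (k - kaux))⁻¹ *
          ∑ i ∈ Finset.range (m + 1), ∑ j ∈ Finset.range (s + 1),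
            (N i j : ℝ) * (krawtchouk m w i : ℝ) * (krawtchouk s taux j : ℝ) := by
    classical
    subst hHt
    subst hy
    -- helper char-2 identities
    have addself : ∀ {M : Type} [AddCommGroup M] [Module (ZMod 2) M] (a b : M),
        a + b + a = b := fun a b => by
      rw [add_comm a b, add_assoc, add_self_zmod2, add_zero]
    have addself' : ∀ {M : Type} [AddCommGroup M] [Module (ZMod 2) M] (a b : M),
        a + (b + a) = b := fun a b => by
      rw [add_comm b a, ← add_assoc, add_self_zmod2, zero_add]
    have addcancel : ∀ {M : Type} [AddCommGroup M] [Module (ZMod 2) M] (a b : M),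
        a + b + b = a := fun a b => by
      rw [add_assoc, add_self_zmod2, add_zero]
    -- key fact: (p, p R) ∈ C for all p
    have keyA : ∀ p : Fin s → ZMod 2, (p, Matrix.vecMul p R) ∈ C := by
      intro p
      rw [← dualCodeProd_dualCodeProd C, mem_dualCodeProd_iff]
      intro h hh
      have hR2 := hR h hh
      show (∑ i, p i * h.1 i) + ∑ j, Matrix.vecMul p R j * h.2 j = 0
      have e1 : (∑ i, p i * h.1 i) = p ⬝ᵥ h.1 := rfl
      have e2 : (∑ j, Matrix.vecMul p R j * h.2 j) = Matrix.vecMul p R ⬝ᵥ h.2 := rfl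
      rw [e1, e2, hR2, Matrix.dotProduct_mulVec, add_self_zmod2]
    -- the intermediate index sets
    set S : Finset ((Fin m → ZMod 2) × (Fin s → ZMod 2)) := Finset.univ.filter
      (fun q => (Matrix.mulVec R q.1, q.1) ∈ dualCodeProd s m C ∧
        q.2 + Matrix.mulVec R q.1 ∈ Caux ∧
        hammingNorm q.1 = w ∧ hammingNorm q.2 = taux) with hS
    set W : Finset ((Fin m → ZMod 2) × (Fin s → ZMod 2)) := Finset.univ.filter
      (fun q => hammingNorm q.1 = w ∧ hammingNorm q.2 = taux) with hW
    set y : (Fin s → ZMod 2) × (Fin m → ZMod 2) := c + (eP, eN) with hy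
    -- Step 1 : reindex the sum over Ht
    have step1 : ∑ p ∈ Finset.univ.filter (fun p :
          ((Fin s → ZMod 2) × (Fin m → ZMod 2)) × (Fin s → ZMod 2) =>
          p.1 ∈ dualCodeProd s m C ∧ p.2 ∈ Caux ∧
          hammingNorm p.1.2 = w ∧ hammingNorm (p.1.1 + p.2) = taux),
        chi ((y.1 ⬝ᵥ p.1.1 + y.2 ⬝ᵥ p.1.2) + x ⬝ᵥ p.2)
        = ∑ q ∈ S, chi ((y.1 ⬝ᵥ Matrix.mulVec R q.1 + y.2 ⬝ᵥ q.1)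
            + x ⬝ᵥ (q.2 + Matrix.mulVec R q.1)) := by
      apply Finset.sum_nbij' (fun p => (p.1.2, p.1.1 + p.2))
        (fun q => ((Matrix.mulVec R q.1, q.1), q.2 + Matrix.mulVec R q.1))
      · intro p hp
        simp only [Finset.mem_filter, Finset.mem_univ, true_and] at hp
        rw [hS, Finset.mem_filter]
        refine ⟨Finset.mem_univ _, ?_⟩
        obtain ⟨h1, h2, h3, h4⟩ := hp
        have hp1 : p.1.1 = Matrix.mulVec R p.1.2 := hR p.1 h1
        refine ⟨?_, ?_, h3, h4⟩
        · rw [← hp1, Prod.mk.eta]  -- (p.1.1, p.1.2) = p.1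
          exact h1
        · rw [← hp1, addself]
          exact h2
      · intro q hq
        rw [hS, Finset.mem_filter] at hq
        obtain ⟨-, h1, h2, h3, h4⟩ := hq
        simp only [Finset.mem_filter, Finset.mem_univ, true_and]
        refine ⟨h1, h2, h3, ?_⟩
        rw [addself']
        exact h4
      · intro p hp
        simp only [Finset.mem_filter, Finset.mem_univ, true_and] at hp
        have hp1 : p.1.1 = Matrix.mulVec R p.1.2 := hR p.1 hp.1
        refine Prod.ext ?_ ?_
        · show (Matrix.mulVec R p.1.2, p.1.2) = p.1
          rw [← hp1, Prod.mk.eta]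
        · show p.1.1 + p.2 + Matrix.mulVec R p.1.2 = p.2
          rw [← hp1, addself]
      · intro q hq
        refine Prod.ext rfl ?_
        show Matrix.mulVec R q.1 + (q.2 + Matrix.mulVec R q.1) = q.2
        rw [addself']
      · intro p hp
        simp only [Finset.mem_filter, Finset.mem_univ, true_and] at hp
        have hp1 : p.1.1 = Matrix.mulVec R p.1.2 := hR p.1 hp.1
        congr 1
        rw [← hp1, addself]
    -- Step 2 : indicators
    have hSW : S = W.filter (fun q => (Matrix.mulVec R q.1, q.1) ∈ dualCodeProd s m C ∧
        q.2 + Matrix.mulVec R q.1 ∈ Caux) := by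
      rw [hS, hW, Finset.filter_filter]
      apply Finset.filter_congr
      intro q _
      tauto
    have step2 : ∑ q ∈ S, chi ((y.1 ⬝ᵥ Matrix.mulVec R q.1 + y.2 ⬝ᵥ q.1)
            + x ⬝ᵥ (q.2 + Matrix.mulVec R q.1))
        = ∑ q ∈ W,
            ((if (Matrix.mulVec R q.1, q.1) ∈ dualCodeProd s m C then (1:ℝ) else 0)
              * (if q.2 + Matrix.mulVec R q.1 ∈ Caux then (1:ℝ) else 0))
            * chi ((y.1 ⬝ᵥ Matrix.mulVec R q.1 + y.2 ⬝ᵥ q.1)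
            + x ⬝ᵥ (q.2 + Matrix.mulVec R q.1)) := by
      rw [hSW, Finset.sum_filter]
      apply Finset.sum_congr rfl
      intro q _
      by_cases h1 : (Matrix.mulVec R q.1, q.1) ∈ dualCodeProd s m C <;>
        by_cases h2 : q.2 + Matrix.mulVec R q.1 ∈ Caux <;>
        simp [h1, h2]
    -- Step 3 : expand indicators into character sums
    have step3 : ∑ q ∈ W,
            ((if (Matrix.mulVec R q.1, q.1) ∈ dualCodeProd s m C then (1:ℝ) else 0)
              * (if q.2 + Matrix.mulVec R q.1 ∈ Caux then (1:ℝ) else 0))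
            * chi ((y.1 ⬝ᵥ Matrix.mulVec R q.1 + y.2 ⬝ᵥ q.1)
            + x ⬝ᵥ (q.2 + Matrix.mulVec R q.1))
        = ((Cfin.card : ℝ))⁻¹ * ((Dfin.card : ℝ))⁻¹ *
            ∑ cc ∈ Cfin, ∑ r ∈ Dfin, ∑ q ∈ W,
              chi ((Matrix.vecMul (y.1 + x + cc.1 + r) R + y.2 + cc.2) ⬝ᵥ q.1
                + (r + x) ⬝ᵥ q.2) := by
      have ptwise : ∀ q ∈ W,
          ((if (Matrix.mulVec R q.1, q.1) ∈ dualCodeProd s m C then (1:ℝ) else 0)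
              * (if q.2 + Matrix.mulVec R q.1 ∈ Caux then (1:ℝ) else 0))
            * chi ((y.1 ⬝ᵥ Matrix.mulVec R q.1 + y.2 ⬝ᵥ q.1)
            + x ⬝ᵥ (q.2 + Matrix.mulVec R q.1))
          = ((Cfin.card : ℝ))⁻¹ * ((Dfin.card : ℝ))⁻¹ *
              ∑ cc ∈ Cfin, ∑ r ∈ Dfin,
                chi ((Matrix.vecMul (y.1 + x + cc.1 + r) R + y.2 + cc.2) ⬝ᵥ q.1
                  + (r + x) ⬝ᵥ q.2) := by
        intro q _
        have i1 : (if (Matrix.mulVec R q.1, q.1) ∈ dualCodeProd s m C then (1:ℝ) else 0)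
            = ((Cfin.card : ℝ))⁻¹ * ∑ cc ∈ Cfin, chi (prodB s m (Matrix.mulVec R q.1, q.1) cc) := by
          rw [hCfin]
          exact indicator_char_prod C (Matrix.mulVec R q.1, q.1)
        have i2 : (if q.2 + Matrix.mulVec R q.1 ∈ Caux then (1:ℝ) else 0)
            = ((Dfin.card : ℝ))⁻¹ * ∑ r ∈ Dfin, chi (dotB (Fin s) (q.2 + Matrix.mulVec R q.1) r) := by
          rw [hDfin]
          exact indicator_char_dual Caux (q.2 + Matrix.mulVec R q.1)
        rw [i1, i2]
        have expand : (∑ cc ∈ Cfin, chi (prodB s m (Matrix.mulVec R q.1, q.1) cc))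
              * (∑ r ∈ Dfin, chi (dotB (Fin s) (q.2 + Matrix.mulVec R q.1) r))
              * chi ((y.1 ⬝ᵥ Matrix.mulVec R q.1 + y.2 ⬝ᵥ q.1)
                  + x ⬝ᵥ (q.2 + Matrix.mulVec R q.1))
            = ∑ cc ∈ Cfin, ∑ r ∈ Dfin,
                chi ((Matrix.vecMul (y.1 + x + cc.1 + r) R + y.2 + cc.2) ⬝ᵥ q.1
                  + (r + x) ⬝ᵥ q.2) := by
          rw [Finset.sum_mul_sum, Finset.sum_mul]
          apply Finset.sum_congr rfl
          intro cc _
          rw [Finset.sum_mul]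
          apply Finset.sum_congr rfl
          intro r _
          rw [← chi_add, ← chi_add]
          congr 1
          have eA : prodB s m (Matrix.mulVec R q.1, q.1) cc
              = Matrix.mulVec R q.1 ⬝ᵥ cc.1 + q.1 ⬝ᵥ cc.2 := rfl
          have eB : dotB (Fin s) (q.2 + Matrix.mulVec R q.1) r
              = (q.2 + Matrix.mulVec R q.1) ⬝ᵥ r := rfl
          rw [eA, eB]
          exact exponent_eq R y.1 x cc.1 r q.2 y.2 cc.2 q.1
        calc ((Cfin.card : ℝ))⁻¹ * (∑ cc ∈ Cfin, chi (prodB s m (Matrix.mulVec R q.1, q.1) cc))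
              * (((Dfin.card : ℝ))⁻¹
                * ∑ r ∈ Dfin, chi (dotB (Fin s) (q.2 + Matrix.mulVec R q.1) r))
              * chi ((y.1 ⬝ᵥ Matrix.mulVec R q.1 + y.2 ⬝ᵥ q.1)
                  + x ⬝ᵥ (q.2 + Matrix.mulVec R q.1))
            = ((Cfin.card : ℝ))⁻¹ * ((Dfin.card : ℝ))⁻¹ *
                ((∑ cc ∈ Cfin, chi (prodB s m (Matrix.mulVec R q.1, q.1) cc))
                  * (∑ r ∈ Dfin, chi (dotB (Fin s) (q.2 + Matrix.mulVec R q.1) r))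
                  * chi ((y.1 ⬝ᵥ Matrix.mulVec R q.1 + y.2 ⬝ᵥ q.1)
                      + x ⬝ᵥ (q.2 + Matrix.mulVec R q.1))) := by ring
          _ = ((Cfin.card : ℝ))⁻¹ * ((Dfin.card : ℝ))⁻¹ *
              ∑ cc ∈ Cfin, ∑ r ∈ Dfin,
                chi ((Matrix.vecMul (y.1 + x + cc.1 + r) R + y.2 + cc.2) ⬝ᵥ q.1
                  + (r + x) ⬝ᵥ q.2) := by rw [expand]
      rw [Finset.sum_congr rfl ptwise, ← Finset.mul_sum]
      congr 1
      rw [Finset.sum_comm]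
      apply Finset.sum_congr rfl
      intro cc _
      rw [Finset.sum_comm]
    -- Step 4 : the inner sum over W via Krawtchouk sums
    have hWprod : W = (Finset.univ.filter fun v : Fin m → ZMod 2 => hammingNorm v = w) ×ˢ
        (Finset.univ.filter fun u : Fin s → ZMod 2 => hammingNorm u = taux) := by
      rw [hW]
      ext q
      simp [Finset.mem_product]
    have Wsum : ∀ (a : Fin m → ZMod 2) (b : Fin s → ZMod 2),
        ∑ q ∈ W, chi (a ⬝ᵥ q.1 + b ⬝ᵥ q.2)
          = (krawtchouk m w (hammingNorm a) : ℝ) * (krawtchouk s taux (hammingNorm b) : ℝ) := by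
      intro a b
      rw [hWprod, Finset.sum_product]
      have inner : ∀ v ∈ (Finset.univ.filter fun v : Fin m → ZMod 2 => hammingNorm v = w),
          ∑ u ∈ (Finset.univ.filter fun u : Fin s → ZMod 2 => hammingNorm u = taux),
            chi (a ⬝ᵥ v + b ⬝ᵥ u)
          = chi (a ⬝ᵥ v) * (krawtchouk s taux (hammingNorm b) : ℝ) := by
        intro v _
        have e : ∀ u ∈ (Finset.univ.filter fun u : Fin s → ZMod 2 => hammingNorm u = taux),
            chi (a ⬝ᵥ v + b ⬝ᵥ u) = chi (a ⬝ᵥ v) * chi (b ⬝ᵥ u) := fun u _ => chi_add _ _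
        rw [Finset.sum_congr rfl e, ← Finset.mul_sum, kraw_sum' s taux b]
      rw [Finset.sum_congr rfl inner, ← Finset.sum_mul, kraw_sum' m w a]
    have step4 : ∑ cc ∈ Cfin, ∑ r ∈ Dfin, ∑ q ∈ W,
          chi ((Matrix.vecMul (y.1 + x + cc.1 + r) R + y.2 + cc.2) ⬝ᵥ q.1
            + (r + x) ⬝ᵥ q.2)
        = ∑ cc ∈ Cfin, ∑ r ∈ Dfin,
            (krawtchouk m w (hammingNorm (Matrix.vecMul (y.1 + x + cc.1 + r) R + y.2 + cc.2)) : ℝ)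
              * (krawtchouk s taux (hammingNorm (r + x)) : ℝ) := by
      apply Finset.sum_congr rfl
      intro cc _
      apply Finset.sum_congr rfl
      intro r _
      exact Wsum _ _
    -- Step 5 : reindex the outer sums
    have fiber : ∀ G : (Fin m → ZMod 2) → ℝ,
        ∑ cc ∈ Cfin, G (Matrix.vecMul cc.1 R + cc.2) = (2 ^ s : ℝ) * ∑ d ∈ CNfin, G d := by
      intro G
      have hmaps : ∀ cc ∈ Cfin, Matrix.vecMul cc.1 R + cc.2 ∈ CNfin := by
        intro cc hcc
        rw [hCfin, Finset.mem_filter] at hcc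
        rw [hCNfin, Finset.mem_filter]
        refine ⟨Finset.mem_univ _, ?_⟩
        rw [Submodule.mem_comap]
        have hEq : (LinearMap.inr (ZMod 2) (Fin s → ZMod 2) (Fin m → ZMod 2))
            (Matrix.vecMul cc.1 R + cc.2) = cc + (cc.1, Matrix.vecMul cc.1 R) := by
          refine Prod.ext ?_ ?_
          · show (0 : Fin s → ZMod 2) = cc.1 + cc.1
            rw [add_self_zmod2]
          · show Matrix.vecMul cc.1 R + cc.2 = cc.2 + Matrix.vecMul cc.1 R
            rw [add_comm]
        rw [hEq]
        exact Submodule.add_mem C hcc.2 (keyA cc.1)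
      have fibcard : ∀ d ∈ CNfin,
          (Cfin.filter (fun cc => Matrix.vecMul cc.1 R + cc.2 = d)).card = 2 ^ s := by
        intro d hd
        rw [hCNfin, Finset.mem_filter, Submodule.mem_comap] at hd
        have h0d : ((0 : Fin s → ZMod 2), d) ∈ C := hd.2
        have : (Cfin.filter (fun cc => Matrix.vecMul cc.1 R + cc.2 = d)).card
            = (Finset.univ : Finset (Fin s → ZMod 2)).card := by
          apply Finset.card_nbij' (fun cc => cc.1) (fun p => (p, Matrix.vecMul p R + d))
          · intro cc _
            exact Finset.mem_univ _
          · intro p _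
            rw [Finset.mem_coe, Finset.mem_filter, hCfin, Finset.mem_filter]
            refine ⟨⟨Finset.mem_univ _, ?_⟩, ?_⟩
            · have hEq : ((p, Matrix.vecMul p R + d) :
                  (Fin s → ZMod 2) × (Fin m → ZMod 2))
                  = (p, Matrix.vecMul p R) + (0, d) := by
                refine Prod.ext ?_ ?_
                · show p = p + 0
                  rw [add_zero]
                · rfl
              beta_reduce
              rw [hEq]
              exact Submodule.add_mem C (keyA p) h0d
            · show Matrix.vecMul p R + (Matrix.vecMul p R + d) = d
              rw [← add_assoc, add_self_zmod2, zero_add]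
          · intro cc hcc
            rw [Finset.mem_coe, Finset.mem_filter] at hcc
            refine Prod.ext rfl ?_
            show Matrix.vecMul cc.1 R + d = cc.2
            rw [← hcc.2, ← add_assoc, add_self_zmod2, zero_add]
          · intro p _
            rfl
        rw [this, Finset.card_univ, Fintype.card_fun, ZMod.card, Fintype.card_fin]
      have fe := Finset.sum_fiberwise_of_maps_to hmaps (fun cc => G (Matrix.vecMul cc.1 R + cc.2))
      rw [← fe, Finset.mul_sum]
      apply Finset.sum_congr rfl
      intro d hd
      have e : ∀ cc ∈ Cfin.filter (fun cc => Matrix.vecMul cc.1 R + cc.2 = d),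
          G (Matrix.vecMul cc.1 R + cc.2) = G d := by
        intro cc hcc
        rw [(Finset.mem_filter.mp hcc).2]
      rw [Finset.sum_congr rfl e, Finset.sum_const, fibcard d hd, nsmul_eq_mul]
      push_cast
      ring
    have reindex_r : ∀ H : (Fin s → ZMod 2) → ℝ,
        ∑ r ∈ Dfin, H r = ∑ r' ∈ Xfin, H (r' + x) := by
      intro H
      apply Finset.sum_nbij' (fun r => r + x) (fun r' => r' + x)
      · intro r hr
        rw [hDfin, Finset.mem_filter] at hr
        rw [hXfin, Finset.mem_filter]
        refine ⟨Finset.mem_univ _, ?_⟩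
        rw [addcancel]
        exact hr.2
      · intro r' hr'
        rw [hXfin, Finset.mem_filter] at hr'
        rw [hDfin, Finset.mem_filter]
        exact ⟨Finset.mem_univ _, hr'.2⟩
      · intro r _
        exact addcancel r x
      · intro r' _
        exact addcancel r' x
      · intro r _
        exact (congrArg H (addcancel r x)).symm
    have shift_cc : ∀ r : Fin s → ZMod 2,
        ∑ cc ∈ Cfin,
            (krawtchouk m w (hammingNorm (Matrix.vecMul (y.1 + x + cc.1 + r) R + y.2 + cc.2)) : ℝ)
          = ∑ cc ∈ Cfin,
            (krawtchouk m w (hammingNorm (Matrix.vecMul (eP + x + cc.1 + r) R + eN + cc.2)) : ℝ) := by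
      intro r
      apply Finset.sum_nbij' (fun cc => cc + c) (fun cc => cc + c)
      · intro cc hcc
        rw [hCfin, Finset.mem_filter] at hcc ⊢
        exact ⟨Finset.mem_univ _, Submodule.add_mem C hcc.2 hc⟩
      · intro cc hcc
        rw [hCfin, Finset.mem_filter] at hcc ⊢
        exact ⟨Finset.mem_univ _, Submodule.add_mem C hcc.2 hc⟩
      · intro cc _
        exact addcancel cc c
      · intro cc _
        exact addcancel cc c
      · intro cc _
        congr 2
        have hy1 : y.1 = c.1 + eP := rfl
        have hy2 : y.2 = c.2 + eN := rfl
        rw [hy1, hy2]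
        simp only [Prod.fst_add, Prod.snd_add]
        rw [show c.1 + eP + x + cc.1 + r = eP + x + (cc.1 + c.1) + r from by abel]
        abel
    have zz_eq : ∀ (cc : (Fin s → ZMod 2) × (Fin m → ZMod 2)) (r' : Fin s → ZMod 2),
        Matrix.vecMul (eP + x + cc.1 + (r' + x)) R + eN + cc.2
          = Matrix.vecMul (r' + eP) R + eN + (Matrix.vecMul cc.1 R + cc.2) := by
      intro cc r'
      rw [show eP + x + cc.1 + (r' + x) = eP + cc.1 + r' + (x + x) from by abel,
        add_self_zmod2, add_zero]
      rw [Matrix.add_vecMul, Matrix.add_vecMul, Matrix.add_vecMul]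
      abel
    have step5 : ∑ cc ∈ Cfin, ∑ r ∈ Dfin,
            (krawtchouk m w (hammingNorm (Matrix.vecMul (y.1 + x + cc.1 + r) R + y.2 + cc.2)) : ℝ)
              * (krawtchouk s taux (hammingNorm (r + x)) : ℝ)
        = (2 ^ s : ℝ) * ∑ r' ∈ Xfin, ∑ d ∈ CNfin,
            (krawtchouk m w (hammingNorm (Matrix.vecMul (r' + eP) R + eN + d)) : ℝ)
              * (krawtchouk s taux (hammingNorm r') : ℝ) := by
      rw [Finset.sum_comm]
      rw [reindex_r (fun r => ∑ cc ∈ Cfin,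
        (krawtchouk m w (hammingNorm (Matrix.vecMul (y.1 + x + cc.1 + r) R + y.2 + cc.2)) : ℝ)
          * (krawtchouk s taux (hammingNorm (r + x)) : ℝ))]
      rw [Finset.mul_sum]
      apply Finset.sum_congr rfl
      intro r' hr'
      rw [← Finset.sum_mul, shift_cc (r' + x), Finset.sum_mul]
      have e : ∀ cc ∈ Cfin,
          (krawtchouk m w (hammingNorm (Matrix.vecMul (eP + x + cc.1 + (r' + x)) R + eN + cc.2)) : ℝ)
            * (krawtchouk s taux (hammingNorm (r' + x + x)) : ℝ)
          = (krawtchouk m w (hammingNorm (Matrix.vecMul (r' + eP) R + eN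
                + (Matrix.vecMul cc.1 R + cc.2))) : ℝ)
              * (krawtchouk s taux (hammingNorm r') : ℝ) := by
        intro cc _
        rw [zz_eq cc r', addcancel r' x]
      rw [Finset.sum_congr rfl e, fiber (fun t =>
        (krawtchouk m w (hammingNorm (Matrix.vecMul (r' + eP) R + eN + t)) : ℝ)
          * (krawtchouk s taux (hammingNorm r') : ℝ))]
    -- Step 6 : group by weights
    have step6 : ∑ r' ∈ Xfin, ∑ d ∈ CNfin,
            (krawtchouk m w (hammingNorm (Matrix.vecMul (r' + eP) R + eN + d)) : ℝ)
              * (krawtchouk s taux (hammingNorm r') : ℝ)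
        = ∑ i ∈ Finset.range (m + 1), ∑ j ∈ Finset.range (s + 1),
            (N i j : ℝ) * (krawtchouk m w i : ℝ) * (krawtchouk s taux j : ℝ) := by
      rw [← Finset.sum_product']
      have hmaps2 : ∀ q ∈ Xfin ×ˢ CNfin,
          (hammingNorm (Matrix.vecMul (q.1 + eP) R + eN + q.2), hammingNorm q.1)
            ∈ Finset.range (m + 1) ×ˢ Finset.range (s + 1) := by
        intro q _
        simp only [Finset.mem_product, Finset.mem_range]
        have h1 := hammingNorm_le (Matrix.vecMul (q.1 + eP) R + eN + q.2)
        have h2 := hammingNorm_le q.1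
        rw [Fintype.card_fin] at h1
        rw [Fintype.card_fin] at h2
        exact ⟨by omega, by omega⟩
      have fe2 := Finset.sum_fiberwise_of_maps_to hmaps2
        (fun q => (krawtchouk m w (hammingNorm (Matrix.vecMul (q.1 + eP) R + eN + q.2)) : ℝ)
          * (krawtchouk s taux (hammingNorm q.1) : ℝ))
      rw [← fe2]
      rw [Finset.sum_product]
      apply Finset.sum_congr rfl
      intro i hi
      apply Finset.sum_congr rfl
      intro j hj
      have hset : ((Xfin ×ˢ CNfin).filter (fun q =>
            (hammingNorm (Matrix.vecMul (q.1 + eP) R + eN + q.2), hammingNorm q.1) = (i, j)))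
          = (Finset.univ.filter (fun q : (Fin s → ZMod 2) × (Fin m → ZMod 2) =>
              (q.1 + x) ∈ dualCode Caux ∧
              q.2 ∈ Submodule.comap
                (LinearMap.inr (ZMod 2) (Fin s → ZMod 2) (Fin m → ZMod 2)) C ∧
              hammingNorm q.1 = j ∧
              hammingNorm (Matrix.vecMul (q.1 + eP) R + eN + q.2) = i)) := by
        ext q
        simp only [hXfin, hCNfin, Finset.mem_filter, Finset.mem_product, Finset.mem_univ,
          true_and, Prod.mk.injEq]
        tauto
      have e : ∀ q ∈ ((Xfin ×ˢ CNfin).filter (fun q =>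
            (hammingNorm (Matrix.vecMul (q.1 + eP) R + eN + q.2), hammingNorm q.1) = (i, j))),
          (krawtchouk m w (hammingNorm (Matrix.vecMul (q.1 + eP) R + eN + q.2)) : ℝ)
            * (krawtchouk s taux (hammingNorm q.1) : ℝ)
          = (krawtchouk m w i : ℝ) * (krawtchouk s taux j : ℝ) := by
        intro q hq
        rw [Finset.mem_filter, Prod.mk.injEq] at hq
        rw [hq.2.1, hq.2.2]
      rw [Finset.sum_congr rfl e, Finset.sum_const, hset, ← hN i j, nsmul_eq_mul]
      ring
    -- Step 7 : constants
    have hc1 : (Cfin.card : ℝ) = 2 ^ k := by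
      rw [hCfin, card_filter_submodule C, hk]
      push_cast
      ring
    have hc2 : (Dfin.card : ℝ) = 2 ^ (s - kaux) := by
      rw [hDfin, card_filter_submodule (dualCode Caux), finrank_dualCode Caux,
        Fintype.card_fin, hkaux]
      push_cast
      ring
    have hks : kaux ≤ s := by
      have h1 := Submodule.finrank_le Caux
      rw [Module.finrank_pi, Fintype.card_fin] at h1
      omega
    have hconst : ((2:ℝ) ^ k)⁻¹ * ((2:ℝ) ^ (s - kaux))⁻¹ * (2 ^ s : ℝ)
        = ((2:ℝ) ^ (k - kaux))⁻¹ := by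
      have hexp : (2:ℝ) ^ (k - kaux) * (2:ℝ) ^ s = (2:ℝ) ^ k * (2:ℝ) ^ (s - kaux) := by
        rw [← pow_add, ← pow_add]
        congr 1
        omega
      have h2k : ((2:ℝ) ^ k) ≠ 0 := by positivity
      have h2s : ((2:ℝ) ^ (s - kaux)) ≠ 0 := by positivity
      have h2kk : ((2:ℝ) ^ (k - kaux)) ≠ 0 := by positivity
      field_simp
      linarith [hexp]
    show ∑ p ∈ Finset.univ.filter (fun p :
          ((Fin s → ZMod 2) × (Fin m → ZMod 2)) × (Fin s → ZMod 2) =>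
          p.1 ∈ dualCodeProd s m C ∧ p.2 ∈ Caux ∧
          hammingNorm p.1.2 = w ∧ hammingNorm (p.1.1 + p.2) = taux),
        chi ((y.1 ⬝ᵥ p.1.1 + y.2 ⬝ᵥ p.1.2) + x ⬝ᵥ p.2)
      = ((2:ℝ) ^ (k - kaux))⁻¹ *
          ∑ i ∈ Finset.range (m + 1), ∑ j ∈ Finset.range (s + 1),
            (N i j : ℝ) * (krawtchouk m w i : ℝ) * (krawtchouk s taux j : ℝ)
    rw [step1, step2, step3, step4, step5, step6, hc1, hc2, ← hconst]
    ring

  rw [key]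
  ring
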